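/- Let ρ_{ABC} be a quantum state and M an operator on the C system with M†M ≤ Id_C. Let ρ̂_{ABC} = (M ρ_{ABC} M†)/Tr(M ρ_{ABC} M†). Then H_min(A|B)_{ρ̂} ≥ H_min(A|B)_ρ − log(1/Tr(M ρ_{ABC} M†)). -/

import Mathlib

open Matrix Kronecker
open scoped Classical ComplexOrder

noncomputable section

abbrev Str (k : ℕ) := Fin k → Bool

def IsDensity {A : Type*} [Fintype A] (ρ : Matrix A A ℂ) : Prop :=
  ρ.PosSemidef ∧ ρ.trace = 1

def IsPure {A : Type*} (ρ : Matrix A A ℂ) : Prop :=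
  ∃ v : A → ℂ, ρ = Matrix.vecMulVec v (star v)

def Matrix.PosSemidef.sqrt {n : Type*} [Fintype n] [DecidableEq n] {A : Matrix n n ℂ}
    (hA : A.PosSemidef) : Matrix n n ℂ :=
  (hA.1.eigenvectorUnitary : Matrix n n ℂ) *
    diagonal (fun i => ((Real.sqrt (hA.1.eigenvalues i) : ℝ) : ℂ)) *
    (star hA.1.eigenvectorUnitary : Matrix n n ℂ)

lemma Matrix.PosSemidef.posSemidef_sqrt {n : Type*} [Fintype n] [DecidableEq n]
    {A : Matrix n n ℂ} (hA : A.PosSemidef) : hA.sqrt.PosSemidef := by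
  have hD : (diagonal (fun i => ((Real.sqrt (hA.1.eigenvalues i) : ℝ) : ℂ))).PosSemidef :=
    Matrix.PosSemidef.diagonal fun i => Complex.zero_le_real.mpr (Real.sqrt_nonneg _)
  have := hD.mul_mul_conjTranspose_same (hA.1.eigenvectorUnitary : Matrix n n ℂ)
  rwa [← Matrix.star_eq_conjTranspose] at this

lemma Matrix.PosSemidef.sqrt_mul_self {n : Type*} [Fintype n] [DecidableEq n]
    {A : Matrix n n ℂ} (hA : A.PosSemidef) : hA.sqrt * hA.sqrt = A := by
  have hspec := hA.1.spectral_theorem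
  rw [Unitary.conjStarAlgAut_apply] at hspec
  unfold Matrix.PosSemidef.sqrt
  set U := hA.1.eigenvectorUnitary
  calc _ = (U : Matrix n n ℂ) * (diagonal (fun i => ((Real.sqrt (hA.1.eigenvalues i) : ℝ) : ℂ))
        * ((star U : Matrix n n ℂ) * U) * diagonal (fun i => ((Real.sqrt (hA.1.eigenvalues i) : ℝ) : ℂ)))
        * (star U : Matrix n n ℂ) := by simp only [Matrix.mul_assoc]
    _ = (U : Matrix n n ℂ) * diagonal (RCLike.ofReal ∘ hA.1.eigenvalues) * (star U : Matrix n n ℂ) := by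
        rw [Unitary.coe_star_mul_self, Matrix.mul_one, diagonal_mul_diagonal]
        congr 2
        congr 1
        funext i
        rw [← Complex.ofReal_mul, Real.mul_self_sqrt (hA.eigenvalues_nonneg i)]
        rfl
    _ = A := hspec.symm

def traceNorm {A : Type*} [Fintype A] [DecidableEq A] (M : Matrix A A ℂ) : ℝ :=
  ((Matrix.posSemidef_conjTranspose_mul_self M).sqrt).trace.re

def msqrt {A : Type*} [Fintype A] [DecidableEq A] (M : Matrix A A ℂ) : Matrix A A ℂ :=
  if h : M.PosSemidef then h.sqrt else 0

def fidelity {A : Type*} [Fintype A] [DecidableEq A] (ρ σ : Matrix A A ℂ) : ℝ :=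
  traceNorm (msqrt ρ * msqrt σ)

def Bures {A : Type*} [Fintype A] [DecidableEq A] (ρ σ : Matrix A A ℂ) : ℝ :=
  Real.sqrt (1 - fidelity ρ σ)

def mUniform (A : Type*) [Fintype A] [DecidableEq A] : Matrix A A ℂ :=
  ((Fintype.card A : ℂ))⁻¹ • (1 : Matrix A A ℂ)

def dmaxLE {A : Type*} [Fintype A] (ρ σ : Matrix A A ℂ) (c : ℝ) : Prop :=
  (((2:ℝ) ^ c) • σ - ρ).PosSemidef

def Dmax {A : Type*} [Fintype A] (ρ σ : Matrix A A ℂ) : ℝ :=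
  sInf {c : ℝ | dmaxLE ρ σ c}

def ptraceRight {A B : Type*} [Fintype A] [Fintype B]
    (ρ : Matrix (A × B) (A × B) ℂ) : Matrix A A ℂ :=
  Matrix.of fun a a' => ∑ b, ρ (a, b) (a', b)

def ptraceLeft {A B : Type*} [Fintype A] [Fintype B]
    (ρ : Matrix (A × B) (A × B) ℂ) : Matrix B B ℂ :=
  Matrix.of fun b b' => ∑ a, ρ (a, b) (a, b')

def condHmin {A B : Type*} [Fintype A] [Fintype B] [DecidableEq A] [DecidableEq B]
    (ρ : Matrix (A × B) (A × B) ℂ) : ℝ :=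
  sSup {x : ℝ | ∃ σ : Matrix B B ℂ, IsDensity σ ∧ x = - Dmax ρ ((1 : Matrix A A ℂ) ⊗ₖ σ)}

def condHminTilde {A B : Type*} [Fintype A] [Fintype B] [DecidableEq A] [DecidableEq B]
    (ρ : Matrix (A × B) (A × B) ℂ) : ℝ :=
  - Dmax ρ ((1 : Matrix A A ℂ) ⊗ₖ ptraceLeft ρ)

/-! ### Auxiliary lemmas -/

lemma psd_csmul {n : Type*} [Fintype n] {X : Matrix n n ℂ} (hX : X.PosSemidef) {z : ℂ}
    (hz : 0 ≤ z) : (z • X).PosSemidef := by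
  refine Matrix.PosSemidef.of_dotProduct_mulVec_nonneg ?_ ?_
  · have hsz : star z = z := by
      rw [Complex.star_def, Complex.conj_eq_iff_im]
      exact (Complex.le_def.mp hz).2.symm
    rw [Matrix.IsHermitian, Matrix.conjTranspose_smul, hsz, hX.1]
  · intro x
    rw [Matrix.smul_mulVec, dotProduct_smul, smul_eq_mul]
    exact mul_nonneg hz (hX.dotProduct_mulVec_nonneg x)

lemma psd_rsmul {n : Type*} [Fintype n] {X : Matrix n n ℂ} (hX : X.PosSemidef) {r : ℝ}
    (hr : 0 ≤ r) : (r • X).PosSemidef := by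
  have h : (r : ℝ) • X = (r : ℂ) • X := by
    ext i j; simp [Matrix.smul_apply, Complex.real_smul]
  rw [h]
  exact psd_csmul hX (by exact_mod_cast Complex.zero_le_real.mpr hr)

lemma psd_diag_nonneg {n : Type*} [Fintype n] [DecidableEq n] {X : Matrix n n ℂ}
    (hX : X.PosSemidef) (a : n) : 0 ≤ X a a := by
  have h := hX.dotProduct_mulVec_nonneg (Pi.single a 1)
  simpa [dotProduct, Matrix.mulVec, Pi.single_apply, Finset.sum_ite_eq,
    mul_ite, ite_mul] using h

lemma psd_trace_nonneg {n : Type*} [Fintype n] [DecidableEq n] {X : Matrix n n ℂ}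
    (hX : X.PosSemidef) : 0 ≤ X.trace :=
  Finset.sum_nonneg fun a _ => psd_diag_nonneg hX a

lemma ptraceRight_trace {A B : Type*} [Fintype A] [Fintype B]
    (X : Matrix (A × B) (A × B) ℂ) : (ptraceRight X).trace = X.trace := by
  simp [ptraceRight, Matrix.trace, Matrix.diag, Fintype.sum_prod_type]

lemma ptraceRight_smul {A B : Type*} [Fintype A] [Fintype B]
    (r : ℝ) (X : Matrix (A × B) (A × B) ℂ) :
    ptraceRight (r • X) = r • ptraceRight X := by
  ext a a'
  simp [ptraceRight, Matrix.smul_apply, Finset.smul_sum]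

lemma ptraceRight_posSemidef {A B : Type*} [Fintype A] [Fintype B]
    {X : Matrix (A × B) (A × B) ℂ} (hX : X.PosSemidef) : (ptraceRight X).PosSemidef := by
  refine Matrix.PosSemidef.of_dotProduct_mulVec_nonneg ?_ ?_
  · show (ptraceRight X)ᴴ = ptraceRight X
    ext a a'
    simp only [ptraceRight, Matrix.conjTranspose_apply, Matrix.of_apply, star_sum]
    exact Finset.sum_congr rfl fun b _ => hX.1.apply _ _
  · intro v
    have hc : ∀ c : B, dotProduct (star (fun q : A × B => if q.2 = c then v q.1 else 0))
          (X *ᵥ (fun q : A × B => if q.2 = c then v q.1 else 0))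
        = ∑ a, ∑ a', star (v a) * (X (a,c) (a',c) * v a') := by
      intro c
      simp only [dotProduct, Matrix.mulVec, Pi.star_apply, Fintype.sum_prod_type,
        apply_ite (star : ℂ → ℂ), star_zero, ite_mul, mul_ite, mul_zero, zero_mul,
        Finset.sum_ite_eq', Finset.mem_univ, if_true]
      exact Finset.sum_congr rfl fun a _ => Finset.mul_sum _ _ _
    have key : dotProduct (star v) ((ptraceRight X) *ᵥ v)
        = ∑ c : B, ∑ a, ∑ a', star (v a) * (X (a,c) (a',c) * v a') := by
      simp only [dotProduct, Matrix.mulVec, ptraceRight, Matrix.of_apply,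
        Pi.star_apply, Finset.sum_mul, Finset.mul_sum]
      exact (Finset.sum_congr rfl fun a _ => Finset.sum_comm).trans Finset.sum_comm
    rw [key]
    simp_rw [← hc]
    exact Finset.sum_nonneg fun c _ => hX.dotProduct_mulVec_nonneg _

def gmap {D C : Type*} [Fintype D] [Fintype C]
    (ρ : Matrix (D × C) (D × C) ℂ) (N : Matrix C C ℂ) : Matrix D D ℂ :=
  Matrix.of fun x y => ∑ c₁, ∑ c₂, ρ (x, c₁) (y, c₂) * N c₂ c₁

lemma gmap_one {D C : Type*} [Fintype D] [Fintype C] [DecidableEq C]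
    (ρ : Matrix (D × C) (D × C) ℂ) : gmap ρ 1 = ptraceRight ρ := by
  ext x y
  simp [gmap, ptraceRight, Matrix.one_apply, mul_ite, Finset.sum_ite_eq', Finset.sum_ite_eq]

lemma gmap_sub {D C : Type*} [Fintype D] [Fintype C]
    (ρ : Matrix (D × C) (D × C) ℂ) (N₁ N₂ : Matrix C C ℂ) :
    gmap ρ (N₁ - N₂) = gmap ρ N₁ - gmap ρ N₂ := by
  ext x y
  simp [gmap, Matrix.sub_apply, mul_sub, Finset.sum_sub_distrib]

lemma ptrace_kron_conj {D C : Type*} [Fintype D] [Fintype C] [DecidableEq D] [DecidableEq C]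
    (ρ : Matrix (D × C) (D × C) ℂ) (K K' : Matrix C C ℂ) :
    ptraceRight (((1 : Matrix D D ℂ) ⊗ₖ K) * ρ * ((1 : Matrix D D ℂ) ⊗ₖ K'))
      = gmap ρ (K' * K) := by
  ext x y
  simp only [ptraceRight, gmap, Matrix.of_apply, Matrix.mul_apply, kroneckerMap_apply,
    Fintype.sum_prod_type, Matrix.one_apply, ite_mul, mul_ite, one_mul, zero_mul, mul_zero,
    mul_one, Finset.sum_ite_eq', Finset.sum_ite_eq, Finset.mem_univ, if_true]
  simp only [ite_mul, mul_ite, zero_mul, mul_zero, Finset.sum_ite_irrel,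
    Finset.sum_const_zero, Finset.sum_ite_eq, Finset.sum_ite_eq', Finset.mem_univ, if_true,
    Finset.sum_mul, Finset.mul_sum]
  rw [Finset.sum_comm]
  refine (Finset.sum_congr rfl fun c2 _ => Finset.sum_comm).trans ?_
  conv_lhs => rw [Finset.sum_comm]
  exact Finset.sum_congr rfl fun c1 _ => Finset.sum_congr rfl fun c2 _ =>
    Finset.sum_congr rfl fun c _ => by ring

lemma csq_bound {n : Type*} [Fintype n] (f v : n → ℂ) :
    Complex.normSq (∑ u, f u * v u)
      ≤ (∑ u, Complex.normSq (f u)) * (∑ u, Complex.normSq (v u)) := by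
  have h1 : ‖∑ u, f u * v u‖ ≤ ∑ u, ‖f u‖ * ‖v u‖ := by
    refine (norm_sum_le _ _).trans ?_
    exact le_of_eq (Finset.sum_congr rfl fun u _ => norm_mul _ _)
  have h2 : (∑ u, ‖f u‖ * ‖v u‖) ^ 2 ≤ (∑ u, ‖f u‖ ^ 2) * ∑ u, ‖v u‖ ^ 2 :=
    Finset.sum_mul_sq_le_sq_mul_sq _ _ _
  calc Complex.normSq (∑ u, f u * v u) = ‖∑ u, f u * v u‖ ^ 2 := by
        rw [Complex.normSq_eq_norm_sq]
    _ ≤ (∑ u, ‖f u‖ * ‖v u‖) ^ 2 := pow_le_pow_left₀ (norm_nonneg _) h1 2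
    _ ≤ (∑ u, ‖f u‖ ^ 2) * ∑ u, ‖v u‖ ^ 2 := h2
    _ = (∑ u, Complex.normSq (f u)) * (∑ u, Complex.normSq (v u)) := by
        simp_rw [Complex.normSq_eq_norm_sq]

lemma psd_sub_trace_smul_one {n : Type*} [Fintype n] [DecidableEq n] {X : Matrix n n ℂ}
    (hX : X.PosSemidef) : (X.trace • (1 : Matrix n n ℂ) - X).PosSemidef := by
  set S := hX.sqrt with hSdef
  have hS : S.PosSemidef := hX.posSemidef_sqrt
  have hSH : Sᴴ = S := hS.isHermitian
  have hX2 : X = Sᴴ * S := by rw [hSH, hX.sqrt_mul_self]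
  have q2 : X.trace = ((∑ k, ∑ u, Complex.normSq (S k u) : ℝ) : ℂ) := by
    rw [hX2]
    simp only [Matrix.trace, Matrix.diag, Matrix.mul_apply, Matrix.conjTranspose_apply]
    rw [Finset.sum_comm]
    push_cast
    exact Finset.sum_congr rfl fun k _ => Finset.sum_congr rfl fun u _ => by
      rw [Complex.star_def, mul_comm, Complex.mul_conj]
  have hts : star X.trace = X.trace := by
    rw [q2]; exact Complex.conj_ofReal _
  refine Matrix.PosSemidef.of_dotProduct_mulVec_nonneg ?_ ?_
  · show _ = _
    rw [Matrix.conjTranspose_sub, Matrix.conjTranspose_smul, Matrix.conjTranspose_one,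
      hX.1, hts]
  · intro v
    have q1 : dotProduct (star v) (X *ᵥ v)
        = ((∑ k, Complex.normSq ((S *ᵥ v) k) : ℝ) : ℂ) := by
      rw [hX2, ← Matrix.mulVec_mulVec, Matrix.dotProduct_mulVec, ← Matrix.star_mulVec]
      simp only [dotProduct, Pi.star_apply]
      push_cast
      exact Finset.sum_congr rfl fun k _ => by
        rw [Complex.star_def, mul_comm, Complex.mul_conj]
    have q3 : dotProduct (star v) v = ((∑ u, Complex.normSq (v u) : ℝ) : ℂ) := by
      simp only [dotProduct, Pi.star_apply]
      push_cast
      exact Finset.sum_congr rfl fun u _ => by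
        rw [Complex.star_def, mul_comm, Complex.mul_conj]
    have hreal : (∑ k, Complex.normSq ((S *ᵥ v) k))
        ≤ (∑ k, ∑ u, Complex.normSq (S k u)) * (∑ u, Complex.normSq (v u)) := by
      rw [Finset.sum_mul]
      exact Finset.sum_le_sum fun k _ => csq_bound (fun u => S k u) v
    rw [Matrix.sub_mulVec, dotProduct_sub, Matrix.smul_mulVec,
      Matrix.one_mulVec, dotProduct_smul, q1, q2, q3, smul_eq_mul,
      ← Complex.ofReal_mul, ← Complex.ofReal_sub]
    rw [Complex.zero_le_real]
    linarith

lemma kron_one_conjTranspose {D C : Type*} [Fintype D] [Fintype C] [DecidableEq D]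
    (K : Matrix C C ℂ) : ((1 : Matrix D D ℂ) ⊗ₖ K)ᴴ = (1 : Matrix D D ℂ) ⊗ₖ Kᴴ := by
  ext ⟨a, c⟩ ⟨a', c'⟩
  simp [Matrix.conjTranspose_apply, Matrix.one_apply, apply_ite (star : ℂ → ℂ), eq_comm]

lemma isDensity_single {B : Type*} [Fintype B] [DecidableEq B] (b : B) :
    IsDensity (Matrix.diagonal (Pi.single b 1) : Matrix B B ℂ) := by
  constructor
  · refine Matrix.PosSemidef.diagonal fun i => ?_
    rcases eq_or_ne i b with h | h <;> simp [Pi.single_apply, h]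
  · simp [Matrix.trace_diagonal, Finset.sum_pi_single']

/-- Conditioning on a measurement (Kraus operator `M` on `C` with
`M†M ≤ Id`) of success probability `p` decreases `H_min(A|B)` by at most `log(1/p)`. -/
theorem hmin_decrease_under_measurement {A B C : Type*} [Fintype A] [Fintype B] [Fintype C]
    [DecidableEq A] [DecidableEq B] [DecidableEq C]
    (ρ : Matrix ((A × B) × C) ((A × B) × C) ℂ) (hρ : IsDensity ρ)
    (M : Matrix C C ℂ) (hM : ((1 : Matrix C C ℂ) - Mᴴ * M).PosSemidef)
    (p : ℝ) (hp : 0 < p)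
    (τ : Matrix ((A × B) × C) ((A × B) × C) ℂ)
    (hτ : τ = ((1 : Matrix (A × B) (A × B) ℂ) ⊗ₖ M) * ρ *
      ((1 : Matrix (A × B) (A × B) ℂ) ⊗ₖ Mᴴ))
    (hptr : τ.trace = (p : ℂ)) :
    condHmin (ptraceRight (p⁻¹ • τ)) ≥ condHmin (ptraceRight ρ) - Real.logb 2 (1 / p) := by
  classical
  set L := Real.logb 2 (1 / p) with hL
  set R := ptraceRight ρ with hRdef
  set T := ptraceRight (p⁻¹ • τ) with hTdef
  -- nonemptiness
  have hne : Nonempty ((A × B) × C) := by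
    by_contra h
    rw [not_nonempty_iff] at h
    have h1 := hρ.2
    rw [Matrix.trace] at h1
    simp [Finset.univ_eq_empty] at h1
  have hA : Nonempty A := ⟨hne.some.1.1⟩
  have hB : Nonempty B := ⟨hne.some.1.2⟩
  -- basic facts on R, τ, T
  have hτpsd : τ.PosSemidef := by
    rw [hτ, ← kron_one_conjTranspose]
    exact hρ.1.mul_mul_conjTranspose_same _
  have hτ'psd : (ptraceRight τ).PosSemidef := ptraceRight_posSemidef hτpsd
  have hRpsd : R.PosSemidef := ptraceRight_posSemidef hρ.1
  have hRtr : R.trace = 1 := by rw [hRdef, ptraceRight_trace, hρ.2]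
  have hτ'tr : (ptraceRight τ).trace = (p : ℂ) := by rw [ptraceRight_trace, hptr]
  have hTeq : T = p⁻¹ • ptraceRight τ := by rw [hTdef, ptraceRight_smul]
  have hTpsd : T.PosSemidef := by
    rw [hTeq]; exact psd_rsmul hτ'psd (by positivity)
  have hTtr : T.trace = 1 := by
    rw [hTeq, Matrix.trace_smul, hτ'tr, Complex.real_smul]
    push_cast
    field_simp
  -- key PSD inequality : R - ptraceRight τ is PSD
  have hkey : (R - ptraceRight τ).PosSemidef := by
    set S := hM.sqrt with hSd
    have hSpsd : S.PosSemidef := hM.posSemidef_sqrt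
    have hSH : Sᴴ = S := hSpsd.isHermitian
    have hSS : S * S = 1 - Mᴴ * M := hM.sqrt_mul_self
    have h1 : ptraceRight (((1 : Matrix (A × B) (A × B) ℂ) ⊗ₖ S) * ρ *
        ((1 : Matrix (A × B) (A × B) ℂ) ⊗ₖ S)) = gmap ρ ((1 : Matrix C C ℂ) - Mᴴ * M) := by
      rw [ptrace_kron_conj, hSS]
    have h2 : gmap ρ ((1 : Matrix C C ℂ) - Mᴴ * M) = R - ptraceRight τ := by
      rw [gmap_sub, gmap_one, hτ, ptrace_kron_conj, hRdef]
    rw [← h2, ← h1]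
    apply ptraceRight_posSemidef
    have h3 : ((1 : Matrix (A × B) (A × B) ℂ) ⊗ₖ S) * ρ *
        ((1 : Matrix (A × B) (A × B) ℂ) ⊗ₖ S)
        = ((1 : Matrix (A × B) (A × B) ℂ) ⊗ₖ S) * ρ *
          ((1 : Matrix (A × B) (A × B) ℂ) ⊗ₖ S)ᴴ := by
      rw [kron_one_conjTranspose, hSH]
    rw [h3]
    exact hρ.1.mul_mul_conjTranspose_same _
  -- p ≤ 1 and L ≥ 0
  have hp1 : p ≤ 1 := by
    have h0 := psd_trace_nonneg hkey
    rw [Matrix.trace_sub, hRtr, hτ'tr] at h0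
    have he : (1 : ℂ) - (p : ℂ) = ((1 - p : ℝ) : ℂ) := by push_cast; ring
    rw [he, Complex.zero_le_real] at h0
    linarith
  have hL0 : 0 ≤ L := Real.logb_nonneg (by norm_num) (by rw [le_div_iff₀ hp]; linarith)
  set KA := Real.logb 2 (Fintype.card A) with hKAdef
  have hcardA : (1:ℝ) ≤ Fintype.card A := by exact_mod_cast Fintype.card_pos
  have hKA0 : 0 ≤ KA := Real.logb_nonneg (by norm_num) hcardA
  -- lower bound on admissible c
  have hlow : ∀ (W : Matrix (A × B) (A × B) ℂ), W.trace = 1 →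
      ∀ (σ : Matrix B B ℂ), IsDensity σ → ∀ c : ℝ,
        dmaxLE W ((1 : Matrix A A ℂ) ⊗ₖ σ) c → -KA ≤ c := by
    intro W hW σ hσ c hc
    have h0 := psd_trace_nonneg hc
    rw [Matrix.trace_sub, Matrix.trace_smul, Matrix.trace_kronecker, Matrix.trace_one,
      hσ.2, hW, mul_one, Complex.real_smul] at h0
    have he : (((2:ℝ)^c * (Fintype.card A : ℝ) - 1 : ℝ) : ℂ)
        = (((2:ℝ)^c : ℝ) : ℂ) * ((Fintype.card A : ℕ) : ℂ) - 1 := by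
      rw [Complex.ofReal_sub, Complex.ofReal_mul, Complex.ofReal_one, Complex.ofReal_natCast]
    rw [← he, Complex.zero_le_real] at h0
    have hcard : (0:ℝ) < Fintype.card A := by exact_mod_cast Fintype.card_pos
    have h2 : ((Fintype.card A : ℝ))⁻¹ ≤ (2:ℝ)^c := by
      rw [inv_eq_one_div, div_le_iff₀ hcard]; linarith
    calc -KA = Real.logb 2 ((Fintype.card A : ℝ))⁻¹ := by rw [Real.logb_inv]
      _ ≤ Real.logb 2 ((2:ℝ)^c) :=
          Real.logb_le_logb_of_le one_lt_two (by positivity) h2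
      _ = c := Real.logb_rpow (by norm_num) (by norm_num)
  -- the τ-side set is bounded above
  have hTbdd : BddAbove {x : ℝ | ∃ σ : Matrix B B ℂ, IsDensity σ ∧
      x = - Dmax T ((1 : Matrix A A ℂ) ⊗ₖ σ)} := by
    refine ⟨KA, ?_⟩
    rintro x ⟨σ, hσ, rfl⟩
    by_cases hS : {c : ℝ | dmaxLE T ((1 : Matrix A A ℂ) ⊗ₖ σ) c}.Nonempty
    · have h1 : -KA ≤ sInf {c : ℝ | dmaxLE T ((1 : Matrix A A ℂ) ⊗ₖ σ) c} :=
        le_csInf hS fun c hc => hlow T hTtr σ hσ c hc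
      rw [Dmax]
      linarith
    · rw [Set.not_nonempty_iff_eq_empty] at hS
      rw [Dmax, hS, Real.sInf_empty]
      simpa using hKA0
  -- the ρ-side set is nonempty
  have hRne : {x : ℝ | ∃ σ : Matrix B B ℂ, IsDensity σ ∧
      x = - Dmax R ((1 : Matrix A A ℂ) ⊗ₖ σ)}.Nonempty :=
    ⟨_, ⟨Matrix.diagonal (Pi.single hB.some 1), isDensity_single _, rfl⟩⟩
  -- main bound on each element of the ρ-side set
  have hmain : ∀ x ∈ {x : ℝ | ∃ σ : Matrix B B ℂ, IsDensity σ ∧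
      x = - Dmax R ((1 : Matrix A A ℂ) ⊗ₖ σ)},
      x ≤ sSup {x : ℝ | ∃ σ : Matrix B B ℂ, IsDensity σ ∧
        x = - Dmax T ((1 : Matrix A A ℂ) ⊗ₖ σ)} + L := by
    rintro x ⟨σ, hσ, rfl⟩
    by_cases hS : {c : ℝ | dmaxLE R ((1 : Matrix A A ℂ) ⊗ₖ σ) c}.Nonempty
    · -- case 1 : honest comparison
      have hmap : ∀ c : ℝ, dmaxLE R ((1 : Matrix A A ℂ) ⊗ₖ σ) c →
          dmaxLE T ((1 : Matrix A A ℂ) ⊗ₖ σ) (c + L) := by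
        intro c hc
        rw [dmaxLE] at hc ⊢
        have h2L : (2:ℝ) ^ (c + L) = (2:ℝ)^c * p⁻¹ := by
          rw [Real.rpow_add (by norm_num : (0:ℝ) < 2), hL,
            Real.rpow_logb (by norm_num) (by norm_num) (by positivity), one_div]
        have hrw : ((2:ℝ) ^ (c + L)) • ((1 : Matrix A A ℂ) ⊗ₖ σ) - T
            = p⁻¹ • ((((2:ℝ)^c) • ((1 : Matrix A A ℂ) ⊗ₖ σ) - R) + (R - ptraceRight τ)) := by
          rw [hTeq, h2L]
          ext q q'
          simp only [Matrix.sub_apply, Matrix.add_apply, Matrix.smul_apply,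
            Complex.real_smul]
          push_cast
          ring
        rw [hrw]
        exact psd_rsmul (Matrix.PosSemidef.add hc hkey) (by positivity)
      obtain ⟨c₀, hc₀⟩ := hS
      have hTSbdd : BddBelow {c : ℝ | dmaxLE T ((1 : Matrix A A ℂ) ⊗ₖ σ) c} :=
        ⟨-KA, fun c hc => hlow T hTtr σ hσ c hc⟩
      have h1 : sInf {c : ℝ | dmaxLE T ((1 : Matrix A A ℂ) ⊗ₖ σ) c} - L
          ≤ sInf {c : ℝ | dmaxLE R ((1 : Matrix A A ℂ) ⊗ₖ σ) c} := by
        refine le_csInf ⟨c₀, hc₀⟩ fun c hc => ?_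
        have h2 := csInf_le hTSbdd (hmap c hc)
        linarith
      have h3 : - Dmax T ((1 : Matrix A A ℂ) ⊗ₖ σ) ∈ {x : ℝ | ∃ σ : Matrix B B ℂ,
          IsDensity σ ∧ x = - Dmax T ((1 : Matrix A A ℂ) ⊗ₖ σ)} := ⟨σ, hσ, rfl⟩
      have h4 := le_csSup hTbdd h3
      rw [Dmax] at *
      linarith
    · -- case 2 : the ρ-side value is the junk value 0
      rw [Set.not_nonempty_iff_eq_empty] at hS
      have hx : - Dmax R ((1 : Matrix A A ℂ) ⊗ₖ σ) = 0 := by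
        rw [Dmax, hS, Real.sInf_empty, neg_zero]
      rw [hx]
      by_cases hcard : 1 < Fintype.card B
      · -- find a positive diagonal entry of T
        have hw : ∃ w : A × B, 0 < (T w w).re := by
          by_contra hwc
          push_neg at hwc
          have h5 : (T.trace).re ≤ 0 := by
            rw [Matrix.trace, Complex.re_sum]
            exact Finset.sum_nonpos fun w _ => hwc w
          rw [hTtr] at h5
          norm_num at h5
        obtain ⟨⟨a₀, b₀⟩, hw⟩ := hw
        obtain ⟨b₁, hb₁⟩ := Fintype.exists_ne_of_one_lt_card hcard b₀
        have hσ'' := isDensity_single (B := B) b₁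
        have hSempty : {c : ℝ | dmaxLE T
            ((1 : Matrix A A ℂ) ⊗ₖ (Matrix.diagonal (Pi.single b₁ 1) : Matrix B B ℂ)) c} = ∅ := by
          rw [Set.eq_empty_iff_forall_notMem]
          intro c hc
          have h0 := psd_diag_nonneg hc (a₀, b₀)
          have he : (((2:ℝ)^c) • ((1 : Matrix A A ℂ) ⊗ₖ (Matrix.diagonal (Pi.single b₁ 1) : Matrix B B ℂ))
              - T) (a₀, b₀) (a₀, b₀) = - T (a₀, b₀) (a₀, b₀) := by
            simp [Matrix.sub_apply, Matrix.smul_apply, Matrix.diagonal_apply,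
              Pi.single_apply, (Ne.symm hb₁)]
          rw [he] at h0
          have h6 := (Complex.le_def.mp h0).1
          simp only [Complex.zero_re, Complex.neg_re] at h6
          linarith
        have h0T : (0:ℝ) ∈ {x : ℝ | ∃ σ : Matrix B B ℂ, IsDensity σ ∧
            x = - Dmax T ((1 : Matrix A A ℂ) ⊗ₖ σ)} := by
          refine ⟨(Matrix.diagonal (Pi.single b₁ 1) : Matrix B B ℂ), hσ'', ?_⟩
          rw [Dmax, hSempty, Real.sInf_empty, neg_zero]
        have h7 := le_csSup hTbdd h0T
        linarith
      · -- |B| = 1 : contradiction with emptiness of the ρ-side feasible set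
        exfalso
        have hcB : Fintype.card B = 1 :=
          le_antisymm (not_lt.mp hcard) Fintype.card_pos
        have hsub : Subsingleton B := Fintype.card_le_one_iff_subsingleton.mp hcB.le
        have hσbb : ∀ b : B, σ b b = 1 := by
          intro b
          have h8 := hσ.2
          rw [Matrix.trace] at h8
          rwa [Fintype.sum_subsingleton _ b] at h8
        have hone : ((1 : Matrix A A ℂ) ⊗ₖ σ) = 1 := by
          ext ⟨a, b⟩ ⟨a', b'⟩
          have hbb : b = b' := Subsingleton.elim _ _
          subst hbb
          rcases eq_or_ne a a' with h | h <;>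
            simp [Matrix.one_apply, Prod.ext_iff, h, hσbb b]
        have hmem : (0:ℝ) ∈ {c : ℝ | dmaxLE R ((1 : Matrix A A ℂ) ⊗ₖ σ) c} := by
          show dmaxLE R ((1 : Matrix A A ℂ) ⊗ₖ σ) 0
          rw [dmaxLE, hone]
          have h9 := psd_sub_trace_smul_one hRpsd
          rw [hRtr] at h9
          simpa [Real.rpow_zero] using h9
        rw [hS] at hmem
        exact hmem
  -- conclude
  rw [ge_iff_le, sub_le_iff_le_add]
  rw [condHmin, condHmin]
  exact csSup_le hRne hmain
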